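/- Let G be a group, L a finite subgroup of the center of G, H a finite subgroup of G, c : L → ℂ a function, and P_c : MonoidAlgebra ℂ G → MonoidAlgebra ℂ G the ℂ-linear map with P_c(single x 1) = Σ_{z∈L} c(z) • single (x*z) 1. For a ∈ G let |aH⟩ := Σ_{h∈H} single (a*h) 1 ∈ MonoidAlgebra ℂ G. Then for all a, x₁, x₂ ∈ G: (i) if x₁⁻¹ * x₂ ∈ H then P_c(|aH⟩) * single x₁⁻¹ 1 = P_c(|aH⟩) * single x₂⁻¹ 1; and (ii) if x₁⁻¹ * x₂ does not lie in the subgroup L ⊔ H (whose underlying set is {l*h : l ∈ L, h ∈ H}, since L is central), then the supports (as finitely supported functions G → ℂ) of P_c(|aH⟩) * single x₁⁻¹ 1 and P_c(|aH⟩) * single x₂⁻¹ 1 are disjoint. -/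

import Mathlib

open MonoidAlgebra

theorem P_c_coset_states (G : Type*) [Group G]
    (L : Subgroup G) [Fintype L] (hL : L ≤ Subgroup.center G)
    (H : Subgroup G) [Fintype H]
    (c : L → ℂ)
    (P : MonoidAlgebra ℂ G →ₗ[ℂ] MonoidAlgebra ℂ G)
    (hP : ∀ x : G, P (single x 1) =
      ∑ z : L, c z • single (x * (z : G)) (1 : ℂ)) :
    ∀ a x₁ x₂ : G,
      (x₁⁻¹ * x₂ ∈ H →
        P (∑ h : H, single (a * (h : G)) (1 : ℂ)) * single x₁⁻¹ (1 : ℂ) =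
          P (∑ h : H, single (a * (h : G)) (1 : ℂ)) * single x₂⁻¹ (1 : ℂ)) ∧
      (x₁⁻¹ * x₂ ∉ L ⊔ H →
        Disjoint
          (P (∑ h : H, single (a * (h : G)) (1 : ℂ)) * single x₁⁻¹ (1 : ℂ)).coeff.support
          (P (∑ h : H, single (a * (h : G)) (1 : ℂ)) * single x₂⁻¹ (1 : ℂ)).coeff.support) := by
  classical
  intro a x₁ x₂
  have hcomm : ∀ (z : L) (g : G), g * (z : G) = (z : G) * g := by
    intro z g
    exact ((Subgroup.mem_center_iff.mp (hL z.2)) g)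
  have key : ∀ x : G,
      P (∑ h : H, single (a * (h : G)) (1 : ℂ)) * single x⁻¹ (1 : ℂ)
      = ∑ h : H, ∑ z : L, c z • single (a * (h : G) * (z : G) * x⁻¹) (1 : ℂ) := by
    intro x
    rw [map_sum, Finset.sum_mul]
    refine Finset.sum_congr rfl fun h _ => ?_
    rw [hP, Finset.sum_mul]
    refine Finset.sum_congr rfl fun z _ => ?_
    rw [smul_mul_assoc, single_mul_single, mul_one]
  have hsupp : ∀ (x : G) (g : G),
      g ∈ (∑ h : H, ∑ z : L, c z • single (a * (h : G) * (z : G) * x⁻¹) (1 : ℂ)).coeff.support →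
      ∃ (h : H) (z : L), g = a * (h : G) * (z : G) * x⁻¹ := by
    intro x g hg
    rw [Finsupp.mem_support_iff] at hg
    by_contra hcon
    push_neg at hcon
    apply hg
    rw [coeff_sum, Finset.sum_apply']
    refine Finset.sum_eq_zero fun h _ => ?_
    rw [coeff_sum, Finset.sum_apply']
    refine Finset.sum_eq_zero fun z _ => ?_
    rw [coeff_smul_apply, coeff_single, Finsupp.single_apply,
      if_neg (fun e => hcon h z (e.symm)), smul_zero]
  constructor
  · intro hmem
    rw [key, key]
    refine Fintype.sum_equiv (Equiv.mulRight (⟨x₁⁻¹ * x₂, hmem⟩ : H)) _ _ fun h => ?_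
    refine Finset.sum_congr rfl fun z _ => ?_
    congr 2
    calc a * (h : G) * (z : G) * x₁⁻¹
        = a * (h : G) * ((z : G) * (x₁⁻¹ * x₂)) * x₂⁻¹ := by group
      _ = a * (h : G) * ((x₁⁻¹ * x₂) * (z : G)) * x₂⁻¹ := by rw [hcomm]
      _ = a * ((h : G) * (x₁⁻¹ * x₂)) * (z : G) * x₂⁻¹ := by group
  · intro hnot
    rw [key, key, Finset.disjoint_left]
    intro g hg1 hg2
    obtain ⟨h, z, rfl⟩ := hsupp x₁ g hg1
    obtain ⟨h', z', he⟩ := hsupp x₂ _ hg2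
    apply hnot
    have e2 : x₁⁻¹ * x₂ = (z : G)⁻¹ * (h : G)⁻¹ * ((h' : G) * (z' : G)) := by
      have h3 := congrArg (fun g => ((z : G)⁻¹ * ((h : G)⁻¹ * a⁻¹)) * g * x₂) he
      simp only [mul_assoc] at h3
      simpa [mul_assoc, inv_mul_cancel_left, inv_mul_cancel, mul_one] using h3
    have e3 : x₁⁻¹ * x₂ = ((z : G)⁻¹ * (z' : G)) * ((h : G)⁻¹ * (h' : G)) := by
      rw [e2]
      calc (z : G)⁻¹ * (h : G)⁻¹ * ((h' : G) * (z' : G))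
          = (z : G)⁻¹ * (h : G)⁻¹ * ((z' : G) * (h' : G)) := by rw [hcomm]
        _ = (z : G)⁻¹ * (((h : G)⁻¹ * (z' : G)) * (h' : G)) := by group
        _ = (z : G)⁻¹ * (((z' : G) * (h : G)⁻¹) * (h' : G)) := by rw [hcomm]
        _ = ((z : G)⁻¹ * (z' : G)) * ((h : G)⁻¹ * (h' : G)) := by group
    rw [e3]
    exact mul_mem (Subgroup.mem_sup_left (mul_mem (inv_mem z.2) z'.2))
      (Subgroup.mem_sup_right (mul_mem (inv_mem h.2) h'.2))
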